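/- Under conditions (A1*), (A3*), (A4*) and (A8*), there exists a constant C > 0 such that for all sufficiently large n and every unit vector b ∈ ℝ^{R Σ_{d=1}^D p_d}, b^T M̃_n(β_0) b ≥ C n; equivalently, λ_min(M̃_n(β_0)) ≥ C n, so that λ_min^{−1}(M̃_n(β_0)) = O(n^{−1}). Here M̃_n(β) = Σ_{i=1}^n J(β)^T vec(X_i) A_i^{1/2}(β) R̃^{−1} R_0 R̃^{−1} A_i^{1/2}(β) vec(X_i)^T J(β), which equals Var(s̃_n(β_0)) when evaluated at β_0. -/

import Mathlib

/-!
Common definitions for the tensor GEE setting of Zhang, Li, Zhou, Shen (2014),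
"Tensor generalized estimating equations for longitudinal imaging analysis".
-/

noncomputable section
open MeasureTheory Filter Topology Matrix ProbabilityTheory

namespace TensorGEE

variable {D : ℕ}

/-- Multi-index for a `D`-way tensor of dimensions `p`. -/
abbrev Idx (p : Fin D → ℕ) := (d : Fin D) → Fin (p d)

/-- Index set for the CP parameter `β = vec(B₁,…,B_D) ∈ ℝ^{R Σ_d p_d}`. -/
abbrev PIdx (p : Fin D → ℕ) (R : ℕ) := ((d : Fin D) × Fin (p d)) × Fin R

/-- The CP parameter vector `β`. -/
abbrev Param (p : Fin D → ℕ) (R : ℕ) := PIdx p R → ℝ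

/-- Euclidean norm of a finitely indexed vector. -/
def vnorm {ι : Type*} [Fintype ι] (v : ι → ℝ) : ℝ := Real.sqrt (∑ k, v k ^ 2)

/-- Frobenius norm of a matrix. -/
def frob {ι κ : Type*} [Fintype ι] [Fintype κ] (M : Matrix ι κ ℝ) : ℝ :=
  Real.sqrt (∑ i, ∑ j, M i j ^ 2)

/-- The rank-`R` CP tensor `B = Σ_r β₁⁽ʳ⁾ ∘ ⋯ ∘ β_D⁽ʳ⁾` determined by `β`. -/
def cpTensor {p : Fin D → ℕ} {R : ℕ} (β : Param p R) : Idx p → ℝ :=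
  fun i => ∑ r : Fin R, ∏ d : Fin D, β ⟨⟨d, i d⟩, r⟩

/-- The Jacobian `J(β) = ∂ vec(B)/∂βᵀ = [J₁ ⋯ J_D]`. -/
def Jmat {p : Fin D → ℕ} {R : ℕ} (β : Param p R) : Matrix (Idx p) (PIdx p R) ℝ :=
  fun i k =>
    if i k.1.1 = k.1.2 then ∏ d ∈ Finset.univ.erase k.1.1, β ⟨⟨d, i d⟩, k.2⟩ else 0

/-- The Hessian `H(β, X) = ∂[J(β)ᵀ vec(X)]/∂βᵀ` of the linear systematic part. -/
def Hmat {p : Fin D → ℕ} {R : ℕ} (Xt : Idx p → ℝ) (β : Param p R) :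
    Matrix (PIdx p R) (PIdx p R) ℝ :=
  fun k l => fderiv ℝ (fun b : Param p R => ((Jmat b)ᵀ.mulVec Xt) k) β (Pi.single l 1)

/-- Negative Jacobian `-∂f(β)/∂βᵀ` of a vector field on the parameter space. -/
def negJac {ι : Type*} [Fintype ι] [DecidableEq ι] (f : (ι → ℝ) → ι → ℝ) (β : ι → ℝ) :
    Matrix ι ι ℝ :=
  fun k l => -(fderiv ℝ f β (Pi.single l 1) k)

/-- Largest value of the quadratic form `u ↦ uᵀ M u` over Euclidean-unit vectors
(the largest eigenvalue, for a symmetric matrix). -/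
def lamMaxQF {ι : Type*} [Fintype ι] (M : Matrix ι ι ℝ) : ℝ :=
  sSup {x : ℝ | ∃ u : ι → ℝ, (∑ k, u k ^ 2) = 1 ∧ x = u ⬝ᵥ M.mulVec u}

/-- Smallest value of the quadratic form `u ↦ uᵀ M u` over Euclidean-unit vectors
(the smallest eigenvalue, for a symmetric matrix). -/
def lamMinQF {ι : Type*} [Fintype ι] (M : Matrix ι ι ℝ) : ℝ :=
  sInf {x : ℝ | ∃ u : ι → ℝ, (∑ k, u k ^ 2) = 1 ∧ x = u ⬝ᵥ M.mulVec u}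

variable {m R : ℕ} {p : Fin D → ℕ}

/-- Systematic part `θ = ⟨B, X⟩`. -/
def theta (Xt : Idx p → ℝ) (β : Param p R) : ℝ := ∑ i, cpTensor β i * Xt i

variable (μ : ℝ → ℝ)

/-- `σ²(β) = μ'(θ(β))` (over-dispersion `φ = 1`). -/
def sigma2 (Xt : Idx p → ℝ) (β : Param p R) : ℝ := deriv μ (theta Xt β)

/-- `vec(X_i)`: the matrix with columns `vec(X_{ij})`, `j = 1,…,m`. -/
def vecX (Xi : Fin m → Idx p → ℝ) : Matrix (Idx p) (Fin m) ℝ := fun idx j => Xi j idx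

/-- `A_i^{1/2}(β)`. -/
def Asqrt (Xi : Fin m → Idx p → ℝ) (β : Param p R) : Matrix (Fin m) (Fin m) ℝ :=
  Matrix.diagonal fun j => Real.sqrt (sigma2 μ (Xi j) β)

/-- `A_i^{-1/2}(β)`. -/
def AinvSqrt (Xi : Fin m → Idx p → ℝ) (β : Param p R) : Matrix (Fin m) (Fin m) ℝ :=
  Matrix.diagonal fun j => (Real.sqrt (sigma2 μ (Xi j) β))⁻¹

/-- Mean vector `μ_i(β)`. -/
def muVec (Xi : Fin m → Idx p → ℝ) (β : Param p R) : Fin m → ℝ :=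
  fun j => μ (theta (Xi j) β)

/-- One subject's contribution `J(β)ᵀ vec(X_i) A_i^{1/2}(β) W⁻¹ A_i^{-1/2}(β)(Y_i - μ_i(β))`
to the tensor GEE, with working *inverse* correlation matrix `Winv`. -/
def geeTerm (Xi : Fin m → Idx p → ℝ) (Winv : Matrix (Fin m) (Fin m) ℝ)
    (Yi : Fin m → ℝ) (β : Param p R) : PIdx p R → ℝ :=
  ((Jmat β)ᵀ * vecX Xi * Asqrt μ Xi β * Winv * AinvSqrt μ Xi β).mulVec
    (Yi - muVec μ Xi β)

/-- The tensor GEE function `s_n(β)` with working inverse correlation `Winv`. -/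
def gee (X : ℕ → Fin m → Idx p → ℝ) (Winv : Matrix (Fin m) (Fin m) ℝ)
    (Yv : ℕ → Fin m → ℝ) (n : ℕ) (β : Param p R) : PIdx p R → ℝ :=
  ∑ i ∈ Finset.range n, geeTerm μ (X i) Winv (Yv i) β

/-- The tensor GEE function with an independence working correlation,
`s_init,n(β) = Σ_i J(β)ᵀ vec(X_i)(Y_i − μ_i(β))`. -/
def geeInit (X : ℕ → Fin m → Idx p → ℝ) (Yv : ℕ → Fin m → ℝ) (n : ℕ)
    (β : Param p R) : PIdx p R → ℝ :=
  ∑ i ∈ Finset.range n, ((Jmat β)ᵀ * vecX (X i)).mulVec (Yv i - muVec μ (X i) β)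

/-- `I(β) = n⁻¹ Σ_i J(β)ᵀ vec(X_i) vec(X_i)ᵀ J(β)`. -/
def Imat (X : ℕ → Fin m → Idx p → ℝ) (n : ℕ) (β : Param p R) :
    Matrix (PIdx p R) (PIdx p R) ℝ :=
  (n : ℝ)⁻¹ • ∑ i ∈ Finset.range n, (Jmat β)ᵀ * vecX (X i) * (vecX (X i))ᵀ * Jmat β

/-- `M̃_n(β) = Σ_i J(β)ᵀ vec(X_i) A_i^{1/2} R̃⁻¹ R₀ R̃⁻¹ A_i^{1/2} vec(X_i)ᵀ J(β)`. -/
def Mtilde (X : ℕ → Fin m → Idx p → ℝ) (R0 Rtil : Matrix (Fin m) (Fin m) ℝ)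
    (n : ℕ) (β : Param p R) : Matrix (PIdx p R) (PIdx p R) ℝ :=
  ∑ i ∈ Finset.range n,
    (Jmat β)ᵀ * vecX (X i) * Asqrt μ (X i) β * Rtil⁻¹ * R0 * Rtil⁻¹ *
      Asqrt μ (X i) β * (vecX (X i))ᵀ * Jmat β

/-- `D̃_{n1}(β) = Σ_i J(β)ᵀ vec(X_i) A_i^{1/2} R̃⁻¹ A_i^{1/2} vec(X_i)ᵀ J(β)`. -/
def Dtilde1 (X : ℕ → Fin m → Idx p → ℝ) (Rtil : Matrix (Fin m) (Fin m) ℝ)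
    (n : ℕ) (β : Param p R) : Matrix (PIdx p R) (PIdx p R) ℝ :=
  ∑ i ∈ Finset.range n,
    (Jmat β)ᵀ * vecX (X i) * Asqrt μ (X i) β * Rtil⁻¹ *
      Asqrt μ (X i) β * (vecX (X i))ᵀ * Jmat β

/-- `Z_n = O_p(a_n)`: for every `ε > 0` there is `M` with
`P(‖Z_n‖ > M a_n) ≤ ε` for all sufficiently large `n`. -/
def IsBigOp {Ω : Type*} [MeasurableSpace Ω] (P : Measure Ω) (Z : ℕ → Ω → ℝ)
    (a : ℕ → ℝ) : Prop :=
  ∀ ε : ℝ, 0 < ε → ∃ M : ℝ, ∃ N : ℕ, ∀ n ≥ N,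
    P {ω | M * a n < |Z n ω|} ≤ ENNReal.ofReal ε

/-- Convergence in distribution of real random variables to the law `ν`. -/
def TendstoInDist {Ω : Type*} [MeasurableSpace Ω] (P : Measure Ω) (Z : ℕ → Ω → ℝ)
    (ν : Measure ℝ) : Prop :=
  ∀ f : BoundedContinuousFunction ℝ ℝ,
    Tendsto (fun n => ∫ ω, f (Z n ω) ∂P) atTop (𝓝 (∫ x, f x ∂ν))

end TensorGEE

namespace TensorGEE

open MeasureTheory Filter Topology Matrix ProbabilityTheory

private lemma dot_sum_mulVec {κ : Type*} [Fintype κ] (s : Finset ℕ)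
    (M : ℕ → Matrix κ κ ℝ) (b : κ → ℝ) :
    b ⬝ᵥ (∑ i ∈ s, M i) *ᵥ b = ∑ i ∈ s, b ⬝ᵥ (M i) *ᵥ b := by
  classical
  induction s using Finset.induction_on with
  | empty => simp
  | insert _ _ h ih =>
      rw [Finset.sum_insert h, Finset.sum_insert h, Matrix.add_mulVec,
        dotProduct_add, ih]

private lemma quad_conj {ι κ : Type*} [Fintype ι] [Fintype κ]
    (P : Matrix κ ι ℝ) (S : Matrix κ κ ℝ) (b : ι → ℝ) :
    b ⬝ᵥ (Pᵀ * S * P) *ᵥ b = (P *ᵥ b) ⬝ᵥ S *ᵥ (P *ᵥ b) := by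
  rw [← Matrix.mulVec_mulVec, ← Matrix.mulVec_mulVec, Matrix.dotProduct_mulVec,
    Matrix.vecMul_transpose]

private lemma quad_self {ι κ : Type*} [Fintype ι] [Fintype κ]
    (P : Matrix κ ι ℝ) (b : ι → ℝ) :
    b ⬝ᵥ (Pᵀ * P) *ᵥ b = (P *ᵥ b) ⬝ᵥ (P *ᵥ b) := by
  rw [← Matrix.mulVec_mulVec, Matrix.dotProduct_mulVec, Matrix.vecMul_transpose]

private lemma posdef_quad_lower {m : ℕ} {S : Matrix (Fin m) (Fin m) ℝ} (hS : S.PosDef) :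
    ∃ c : ℝ, 0 < c ∧ ∀ v : Fin m → ℝ, c * (∑ j, v j ^ 2) ≤ v ⬝ᵥ S *ᵥ v := by
  rcases Nat.eq_zero_or_pos m with hm | hm
  · subst hm
    exact ⟨1, one_pos, fun v => by simp [dotProduct]⟩
  · set f : (Fin m → ℝ) → ℝ := fun v => v ⬝ᵥ S *ᵥ v with hf
    set K : Set (Fin m → ℝ) := {v | ∑ j, v j ^ 2 = 1} with hK
    have hfc : Continuous f := by
      simp only [hf, dotProduct, Matrix.mulVec]
      exact continuous_finset_sum _ fun i _ =>
        (continuous_apply i).mul (continuous_finset_sum _ fun j _ =>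
          continuous_const.mul (continuous_apply j))
    have hsq : Continuous fun v : Fin m → ℝ => ∑ j, v j ^ 2 :=
      continuous_finset_sum _ fun j _ => (continuous_apply j).pow 2
    have hKclosed : IsClosed K := isClosed_eq hsq continuous_const
    have hKsub : K ⊆ Metric.closedBall 0 1 := by
      intro v hv
      rw [Metric.mem_closedBall, dist_zero_right]
      refine (pi_norm_le_iff_of_nonneg zero_le_one).2 fun j => ?_
      have h1 : v j ^ 2 ≤ 1 := by
        rw [← hv]
        exact Finset.single_le_sum (fun k _ => sq_nonneg (v k)) (Finset.mem_univ j)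
      calc ‖v j‖ = Real.sqrt (v j ^ 2) := by
            rw [Real.sqrt_sq_eq_abs]; rfl
        _ ≤ Real.sqrt 1 := Real.sqrt_le_sqrt h1
        _ = 1 := Real.sqrt_one
    have hKcomp : IsCompact K :=
      (isCompact_closedBall (0 : Fin m → ℝ) 1).of_isClosed_subset hKclosed hKsub
    have hne : K.Nonempty := by
      refine ⟨Pi.single ⟨0, hm⟩ 1, ?_⟩
      simp [hK, Pi.single_apply, apply_ite (fun x : ℝ => x ^ 2), Finset.sum_ite_eq']
    obtain ⟨v0, hv0K, hmin⟩ := hKcomp.exists_isMinOn hne hfc.continuousOn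
    have hv0ne : v0 ≠ 0 := by
      intro h
      rw [h] at hv0K
      simp [hK] at hv0K
    have hcpos : 0 < f v0 := by
      have := hS.dotProduct_mulVec_pos hv0ne
      simpa [hf] using this
    refine ⟨f v0, hcpos, fun v => ?_⟩
    rcases eq_or_ne (∑ j, v j ^ 2) 0 with h0 | h0
    · have hv : v = 0 := by
        funext j
        have := (Finset.sum_eq_zero_iff_of_nonneg
          (fun k _ => sq_nonneg (v k))).mp h0 j (Finset.mem_univ j)
        exact pow_eq_zero_iff two_ne_zero |>.mp this
      rw [h0, hv]
      simp
    · have hsnn : 0 ≤ ∑ j, v j ^ 2 := Finset.sum_nonneg fun k _ => sq_nonneg _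
      set t := Real.sqrt (∑ j, v j ^ 2) with ht
      have htpos : 0 < t := Real.sqrt_pos.mpr (lt_of_le_of_ne hsnn (Ne.symm h0))
      have htsq : t ^ 2 = ∑ j, v j ^ 2 := Real.sq_sqrt hsnn
      have hu : (t⁻¹ • v) ∈ K := by
        simp only [hK, Set.mem_setOf_eq, Pi.smul_apply, smul_eq_mul, mul_pow]
        rw [← Finset.mul_sum, ← htsq]
        field_simp
      have hq : f v0 ≤ f (t⁻¹ • v) := hmin hu
      have hscale : f (t⁻¹ • v) = t⁻¹ * (t⁻¹ * f v) := by
        simp only [hf]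
        rw [Matrix.mulVec_smul, smul_dotProduct, dotProduct_smul]
        simp [smul_eq_mul]
      rw [hscale] at hq
      have h2 := mul_le_mul_of_nonneg_right hq (sq_nonneg t)
      have htne : t ≠ 0 := ne_of_gt htpos
      have h3 : t⁻¹ * (t⁻¹ * f v) * t ^ 2 = t⁻¹ * t * (t⁻¹ * t) * f v := by ring
      rw [inv_mul_cancel₀ htne, one_mul, one_mul] at h3
      rw [h3] at h2
      rw [← htsq]
      exact h2


/-- Lower eigenvalue bound for `M̃_n(β₀)`: under conditions (A1*), (A3*), (A4*)
and (A8*), there is a constant `C > 0` such that for all sufficiently large `n`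
and every Euclidean-unit vector `b`, `bᵀ M̃_n(β₀) b ≥ C n`; equivalently
`λ_min(M̃_n(β₀)) ≥ C n`, so `λ_min^{-1}(M̃_n(β₀)) = O(n⁻¹)`. -/
theorem tensorGEE_Mtilde_eigenvalue_lower_bound
    {D m R : ℕ} (p : ℕ → Fin D → ℕ) (pn : ℕ → ℕ)
    (μ : ℝ → ℝ)
    (X : (n : ℕ) → ℕ → Fin m → Idx (p n) → ℝ)
    (β0 : (n : ℕ) → Param (p n) R)
    (R0 : Matrix (Fin m) (Fin m) ℝ)
    (Rtil : Matrix (Fin m) (Fin m) ℝ)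
    -- `p_d ∼ p_n` for every mode `d`
    (hpsim : ∃ C : ℝ, 0 < C ∧ ∀ n d,
      (p n d : ℝ) ≤ C * pn n ∧ (pn n : ℝ) ≤ C * p n d)
    -- (A1*) uniformly bounded covariate entries
    (hA1 : ∃ C : ℝ, ∀ n, ∀ i < n, ∀ j idx, |X n i j idx| ≤ C)
    -- (A3*) eigenvalues of `I(β)` bounded between `c₁` and `c₂`
    -- on the ball `‖β − β₀‖ ≤ Δ √(p_n/n)`
    (hA3 : ∃ Δ : ℝ, 0 < Δ ∧ ∃ c1 c2 : ℝ, 0 < c1 ∧ c1 < c2 ∧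
      ∀ n : ℕ, 0 < n →
        ∀ β : Param (p n) R,
          vnorm (β - β0 n) ≤ Δ * Real.sqrt ((pn n : ℝ) / n) →
          (∀ u : PIdx (p n) R → ℝ,
            c1 * (∑ k, u k ^ 2) ≤ u ⬝ᵥ (Imat (X n) n β).mulVec u) ∧
          (∀ u : PIdx (p n) R → ℝ,
            u ⬝ᵥ (Imat (X n) n β).mulVec u ≤ c2 * (∑ k, u k ^ 2)))
    -- (A4*) `R₀` and `R̃` positive definite
    -- (eigenvalues bounded away from 0 and ∞, `m` fixed)
    (hR0 : R0.PosDef) (hRtil : Rtil.PosDef)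
    -- (A8*) `μ'` bounded away from 0 and ∞ near the truth
    (hA8 : ∃ Δ : ℝ, 0 < Δ ∧ ∃ a b : ℝ, 0 < a ∧
      ∀ n : ℕ, 0 < n → ∀ β : Param (p n) R,
        vnorm (β - β0 n) ≤ Δ * Real.sqrt ((pn n : ℝ) / n) → ∀ i < n, ∀ j,
        a ≤ deriv μ (theta (X n i j) β) ∧ deriv μ (theta (X n i j) β) ≤ b) :
    ∃ C : ℝ, 0 < C ∧ ∃ N : ℕ, ∀ n ≥ N,
      ∀ b : PIdx (p n) R → ℝ, (∑ k, b k ^ 2) = 1 →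
        C * n ≤ b ⬝ᵥ (Mtilde μ (X n) R0 Rtil n (β0 n)).mulVec b := by
  classical
  obtain ⟨Δ, hΔ, c1, c2, hc1, hc12, hI⟩ := hA3
  obtain ⟨Δ', hΔ', a, bU, ha, hmu⟩ := hA8
  -- positive definiteness of S = R̃⁻¹ R₀ R̃⁻¹
  have hRinv : (Rtil⁻¹).PosDef := hRtil.inv
  have hRinvH : Rtil⁻¹ᴴ = Rtil⁻¹ := hRinv.1
  have hRinvT : (Rtil⁻¹)ᵀ = Rtil⁻¹ := by
    rw [← Matrix.conjTranspose_eq_transpose_of_trivial]; exact hRinvH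
  have hdet : IsUnit (Rtil⁻¹) := by
    rw [Matrix.isUnit_iff_isUnit_det]
    exact isUnit_iff_ne_zero.mpr hRinv.det_pos.ne'
  have hSpd : (Rtil⁻¹ * R0 * Rtil⁻¹).PosDef := by
    refine Matrix.posDef_iff_dotProduct_mulVec.mpr ⟨?_, ?_⟩
    · show (Rtil⁻¹ * R0 * Rtil⁻¹)ᴴ = _
      rw [Matrix.conjTranspose_mul, Matrix.conjTranspose_mul, hRinvH, hR0.1,
        Matrix.mul_assoc]
    · intro x hx
      have hinj : Function.Injective (Rtil⁻¹).mulVec :=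
        Matrix.mulVec_injective_iff_isUnit.mpr hdet
      have hxne : Rtil⁻¹ *ᵥ x ≠ 0 := by
        intro h
        apply hx
        apply hinj
        rw [h, Matrix.mulVec_zero]
      have hkey : star x ⬝ᵥ (Rtil⁻¹ * R0 * Rtil⁻¹) *ᵥ x
          = star (Rtil⁻¹ *ᵥ x) ⬝ᵥ R0 *ᵥ (Rtil⁻¹ *ᵥ x) := by
        simp only [star_trivial]
        rw [← Matrix.mulVec_mulVec, ← Matrix.mulVec_mulVec, Matrix.dotProduct_mulVec]
        congr 1
        rw [← hRinvT, Matrix.vecMul_transpose]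
        rw [hRinvT]
      rw [hkey]
      exact hR0.dotProduct_mulVec_pos hxne
  obtain ⟨c, hc, hclow⟩ := posdef_quad_lower hSpd
  refine ⟨c * a * c1, mul_pos (mul_pos hc ha) hc1, 1, fun n hn b hb => ?_⟩
  have hn0 : 0 < n := hn
  have hball : ∀ Δ'' : ℝ, 0 < Δ'' →
      vnorm (β0 n - β0 n) ≤ Δ'' * Real.sqrt ((pn n : ℝ) / n) := by
    intro Δ'' hΔ''
    have h0 : vnorm (β0 n - β0 n) = 0 := by simp [vnorm]
    rw [h0]
    exact mul_nonneg hΔ''.le (Real.sqrt_nonneg _)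
  have hIb := (hI n hn0 (β0 n) (hball Δ hΔ)).1 b
  rw [hb, mul_one] at hIb
  -- abbreviations
  set J : Matrix (Idx (p n)) (PIdx (p n) R) ℝ := Jmat (β0 n) with hJ
  set w : ℕ → Fin m → ℝ := fun i => ((vecX (X n i))ᵀ * J) *ᵥ b with hw
  set q : ℕ → Fin m → ℝ :=
    fun i => (Asqrt μ (X n i) (β0 n) * (vecX (X n i))ᵀ * J) *ᵥ b with hqdef
  set term : ℕ → Matrix (PIdx (p n) R) (PIdx (p n) R) ℝ := fun i =>
    Jᵀ * vecX (X n i) * Asqrt μ (X n i) (β0 n) * Rtil⁻¹ * R0 * Rtil⁻¹ *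
      Asqrt μ (X n i) (β0 n) * (vecX (X n i))ᵀ * J with hterm
  have hAT : ∀ i, (Asqrt μ (X n i) (β0 n))ᵀ = Asqrt μ (X n i) (β0 n) := by
    intro i
    simp [Asqrt, Matrix.diagonal_transpose]
  have hMeq : ∀ i, term i =
      (Asqrt μ (X n i) (β0 n) * (vecX (X n i))ᵀ * J)ᵀ * (Rtil⁻¹ * R0 * Rtil⁻¹) *
        (Asqrt μ (X n i) (β0 n) * (vecX (X n i))ᵀ * J) := by
    intro i
    rw [Matrix.transpose_mul, Matrix.transpose_mul, Matrix.transpose_transpose, hAT i]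
    simp only [hterm, Matrix.mul_assoc]
  -- per-subject lower bound
  have key : ∀ i ∈ Finset.range n,
      c * a * (w i ⬝ᵥ w i) ≤ b ⬝ᵥ (term i) *ᵥ b := by
    intro i hi
    rw [Finset.mem_range] at hi
    have hterm' : b ⬝ᵥ (term i) *ᵥ b = q i ⬝ᵥ (Rtil⁻¹ * R0 * Rtil⁻¹) *ᵥ q i := by
      rw [hMeq i]
      exact quad_conj _ _ b
    have hqw : ∀ j, q i j = Real.sqrt (sigma2 μ (X n i j) (β0 n)) * w i j := by
      intro j
      have : q i = Asqrt μ (X n i) (β0 n) *ᵥ (((vecX (X n i))ᵀ * J) *ᵥ b) := by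
        show (Asqrt μ (X n i) (β0 n) * (vecX (X n i))ᵀ * J) *ᵥ b = _
        rw [Matrix.mul_assoc, ← Matrix.mulVec_mulVec]
      rw [this]
      simp [Asqrt, Matrix.mulVec_diagonal, hw]
    have hσ : ∀ j, a ≤ sigma2 μ (X n i j) (β0 n) :=
      fun j => (hmu n hn0 (β0 n) (hball Δ' hΔ') i hi j).1
    have hW : a * (w i ⬝ᵥ w i) ≤ ∑ j, q i j ^ 2 := by
      rw [dotProduct, Finset.mul_sum]
      apply Finset.sum_le_sum
      intro j _
      have hσj := hσ j
      have hσnn : 0 ≤ sigma2 μ (X n i j) (β0 n) := le_trans ha.le hσj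
      rw [hqw j, mul_pow, Real.sq_sqrt hσnn]
      have : w i j * w i j = w i j ^ 2 := (sq (w i j)).symm
      rw [this]
      exact mul_le_mul_of_nonneg_right hσj (sq_nonneg _)
    calc c * a * (w i ⬝ᵥ w i) = c * (a * (w i ⬝ᵥ w i)) := by ring
      _ ≤ c * ∑ j, q i j ^ 2 := mul_le_mul_of_nonneg_left hW hc.le
      _ ≤ q i ⬝ᵥ (Rtil⁻¹ * R0 * Rtil⁻¹) *ᵥ q i := hclow (q i)
      _ = b ⬝ᵥ (term i) *ᵥ b := hterm'.symm
  -- sum of squares equals n times the I(β) quadratic form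
  have hsumw : ∑ i ∈ Finset.range n, w i ⬝ᵥ w i
      = (n : ℝ) * (b ⬝ᵥ (Imat (X n) n (β0 n)) *ᵥ b) := by
    have hIexp : b ⬝ᵥ (Imat (X n) n (β0 n)) *ᵥ b
        = (n : ℝ)⁻¹ * ∑ i ∈ Finset.range n, w i ⬝ᵥ w i := by
      rw [Imat, Matrix.smul_mulVec, dotProduct_smul, smul_eq_mul,
        dot_sum_mulVec]
      congr 1
      apply Finset.sum_congr rfl
      intro i _
      have h1 : (Jmat (β0 n))ᵀ * vecX (X n i) * (vecX (X n i))ᵀ * Jmat (β0 n)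
          = ((vecX (X n i))ᵀ * J)ᵀ * ((vecX (X n i))ᵀ * J) := by
        rw [Matrix.transpose_mul, Matrix.transpose_transpose]
        simp only [hJ, Matrix.mul_assoc]
      rw [h1, quad_self]
    rw [hIexp, ← mul_assoc, mul_inv_cancel₀ (Nat.cast_ne_zero.mpr hn0.ne'), one_mul]
  have hMt : Mtilde μ (X n) R0 Rtil n (β0 n) = ∑ i ∈ Finset.range n, term i := rfl
  rw [hMt, dot_sum_mulVec]
  calc c * a * c1 * (n : ℝ) = (c * a) * ((n : ℝ) * c1) := by ring
    _ ≤ (c * a) * ((n : ℝ) * (b ⬝ᵥ (Imat (X n) n (β0 n)) *ᵥ b)) := by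
        apply mul_le_mul_of_nonneg_left _ (mul_nonneg hc.le ha.le)
        exact mul_le_mul_of_nonneg_left hIb (Nat.cast_nonneg n)
    _ = c * a * ∑ i ∈ Finset.range n, w i ⬝ᵥ w i := by rw [hsumw]
    _ = ∑ i ∈ Finset.range n, c * a * (w i ⬝ᵥ w i) := by rw [Finset.mul_sum]
    _ ≤ ∑ i ∈ Finset.range n, b ⬝ᵥ (term i) *ᵥ b := Finset.sum_le_sum key


end TensorGEE
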